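/- Let ζ = exp(πi/n). For J = (j_1, …, j_n) ∈ I_n (i.e. −m ≤ j_1 < ⋯ < j_n ≤ 3m+1 integers when n = 2m+1, or half-integers in [−m+½, 3m−½] when n = 2m, with ζ^{j_k} ≠ −ζ^{j_l} for k ≠ l), the product ∏_k ζ^{j_k} equals 1 or −1. -/

import Mathlib

open Finset

/-- Sum of `Fin n` in `ℤ`, doubled. -/
lemma aux_sum_fin_int (n : ℕ) : (∑ i : Fin n, (i : ℤ)) * 2 = n * (n - 1) := by
  induction n with
  | zero => simp
  | succ k ih =>
    rw [Fin.sum_univ_castSucc]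
    simp only [Fin.coe_castSucc, Fin.val_last]
    push_cast
    push_cast at ih
    ring_nf
    ring_nf at ih
    linarith

/-- Key combinatorial lemma: if `f : Fin n → ℤ` is injective with values in `[0, 2n)`
and no two values differ by exactly `n`, then `f` hits each residue class mod `n`
exactly once, so its sum is `n*(n-1)/2` mod `n`. -/
lemma aux_key_sum (n : ℕ) (hn : 0 < n) (f : Fin n → ℤ)
    (hinj : Function.Injective f)
    (hlb : ∀ k, 0 ≤ f k) (hub : ∀ k, f k < 2 * n)
    (hdiff : ∀ k l, f k - f l ≠ (n : ℤ)) :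
    ∃ q : ℤ, ∑ k, f k = n * q + ∑ i : Fin n, (i : ℤ) := by
  have hn' : (0 : ℤ) < n := by exact_mod_cast hn
  have hmod : ∀ k, 0 ≤ f k % n ∧ f k % n < n := fun k =>
    ⟨Int.emod_nonneg _ (by omega), Int.emod_lt_of_pos _ hn'⟩
  set g : Fin n → Fin n := fun k => ⟨(f k % n).toNat, by
    have := hmod k; omega⟩ with hg_def
  have hg : Function.Injective g := by
    intro k l h
    have h0 : (f k % n).toNat = (f l % n).toNat := congrArg Fin.val h
    have h1 : f k % n = f l % n := by
      have hk := hmod k; have hl := hmod l; omega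
    have hdvd : (n : ℤ) ∣ f l - f k := Int.ModEq.dvd h1
    obtain ⟨c, hc⟩ := hdvd
    have hck := hlb k; have hcl := hlb l
    have hbk := hub k; have hbl := hub l
    have hc2a : -2 < c := by nlinarith
    have hc2b : c < 2 := by nlinarith
    interval_cases c
    · exact absurd (by linarith : f k - f l = (n : ℤ)) (hdiff k l)
    · exact hinj (by linarith)
    · exact absurd (by linarith : f l - f k = (n : ℤ)) (hdiff l k)
  have hbij : Function.Bijective g := Finite.injective_iff_bijective.mp hg
  have hsum : ∑ k, ((g k : ℕ) : ℤ) = ∑ i : Fin n, (i : ℤ) :=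
    hbij.sum_comp (fun i : Fin n => ((i : ℕ) : ℤ))
  refine ⟨∑ k, f k / n, ?_⟩
  have hdec : ∀ k, f k = (n : ℤ) * (f k / n) + ((g k : ℕ) : ℤ) := by
    intro k
    have h1 := Int.mul_ediv_add_emod (f k) n
    have h2 : ((g k : ℕ) : ℤ) = f k % n := by
      simp only [hg_def]
      exact Int.toNat_of_nonneg (hmod k).1
    omega
  calc ∑ k, f k = ∑ k, ((n : ℤ) * (f k / n) + ((g k : ℕ) : ℤ)) :=
        Finset.sum_congr rfl (fun k _ => hdec k)
    _ = (n : ℤ) * ∑ k, (f k / n) + ∑ k, ((g k : ℕ) : ℤ) := by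
        rw [Finset.sum_add_distrib, Finset.mul_sum]
    _ = _ := by rw [hsum]

/- STATEMENT 12: With ζ = exp(πi/n), for J = (j_1 < … < j_n) in I_n
(integers in [−m, 3m+1] if n = 2m+1, half-integers in [−m+½, 3m−½] if n = 2m,
with ζ^{j_k} ≠ −ζ^{j_l} for k ≠ l), the product Π_k ζ^{j_k} equals 1 or −1.
Here ζ^{j} for a (half-)integer j means exp(πi·j/n). -/
theorem product_root_pm_one (n : ℕ) (hn : 0 < n) (j : Fin n → ℚ)
    (hmono : StrictMono j)
    (hT : (∃ m : ℕ, n = 2 * m + 1 ∧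
            ∀ k, (j k).den = 1 ∧ -(m : ℚ) ≤ j k ∧ j k ≤ 3 * m + 1)
        ∨ (∃ m : ℕ, n = 2 * m ∧
            ∀ k, (∃ t : ℤ, j k = t + 1 / 2) ∧
              -(m : ℚ) + 1 / 2 ≤ j k ∧ j k ≤ 3 * m - 1 / 2))
    (hI : ∀ k l : Fin n, k ≠ l →
        Complex.exp (Real.pi * Complex.I * (j k : ℂ) / (n : ℂ))
          ≠ -Complex.exp (Real.pi * Complex.I * (j l : ℂ) / (n : ℂ))) :
    (∏ k, Complex.exp (Real.pi * Complex.I * (j k : ℂ) / (n : ℂ))) = 1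
    ∨ (∏ k, Complex.exp (Real.pi * Complex.I * (j k : ℂ) / (n : ℂ))) = -1 := by
  have hn0 : (n : ℂ) ≠ 0 := Nat.cast_ne_zero.mpr hn.ne'
  -- From hI: no two j's differ by exactly n.
  have hjdiff : ∀ k l : Fin n, k ≠ l → j k - j l ≠ (n : ℚ) := by
    intro k l hkl heq
    apply hI k l hkl
    have hc : (j k : ℂ) = (j l : ℂ) + (n : ℂ) := by
      have : (j k : ℚ) = j l + n := by linarith
      exact_mod_cast congrArg (fun x : ℚ => (x : ℂ)) this
    have harg : Real.pi * Complex.I * (j k : ℂ) / (n : ℂ) =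
        Real.pi * Complex.I * (j l : ℂ) / (n : ℂ) + Real.pi * Complex.I := by
      rw [hc]; field_simp
    rw [harg, Complex.exp_add, Complex.exp_pi_mul_I]
    ring
  -- Key: the sum of the j's is n times an integer.
  have hsum : ∃ q : ℤ, (∑ k, j k) = (n : ℚ) * q := by
    rcases hT with ⟨m, hnm, hprop⟩ | ⟨m, hnm, hprop⟩
    · -- odd case: j k are integers
      have ht : ∀ k, (((j k).num : ℚ)) = j k := fun k => (Rat.den_eq_one_iff _).mp (hprop k).1
      set t : Fin n → ℤ := fun k => (j k).num with ht_def
      set f : Fin n → ℤ := fun k => t k + m with hf_def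
      have hinj : Function.Injective f := by
        intro k l h
        have : t k = t l := by simpa [hf_def] using h
        apply hmono.injective
        have h2 : (j k).num = (j l).num := this
        rw [← ht k, ← ht l, h2]
      have hlb : ∀ k, 0 ≤ f k := by
        intro k
        have := (hprop k).2.1
        have h1 : -(m : ℚ) ≤ (t k : ℚ) := by rw [ht k]; exact this
        have : -(m : ℤ) ≤ t k := by exact_mod_cast h1
        simp only [hf_def]; omega
      have hub : ∀ k, f k < 2 * n := by
        intro k
        have := (hprop k).2.2
        have h1 : (t k : ℚ) ≤ 3 * m + 1 := by rw [ht k]; exact this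
        have h2 : t k ≤ 3 * (m : ℤ) + 1 := by exact_mod_cast h1
        simp only [hf_def]; omega
      have hdiff : ∀ k l, f k - f l ≠ (n : ℤ) := by
        intro k l heq
        have hkl : k ≠ l := by
          rintro rfl; simp at heq; omega
        apply hjdiff k l hkl
        have : t k - t l = (n : ℤ) := by simp only [hf_def] at heq; omega
        have := congrArg (fun x : ℤ => (x : ℚ)) this
        push_cast at this
        rw [ht k, ht l] at this
        exact this
      obtain ⟨q, hq⟩ := aux_key_sum n hn f hinj hlb hub hdiff
      have hfin : (∑ i : Fin n, (i : ℤ)) = (n : ℤ) * m := by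
        have := aux_sum_fin_int n
        have h2 : ((n : ℤ)) * ((n : ℤ) - 1) = ((n : ℤ) * m) * 2 := by
          subst hnm; push_cast; ring
        rw [h2] at this
        exact mul_right_cancel₀ (by norm_num) this
      refine ⟨q, ?_⟩
      have hft : ∑ k, f k = ∑ k, t k + (n : ℤ) * m := by
        simp only [hf_def, Finset.sum_add_distrib, Finset.sum_const, Finset.card_univ,
          Fintype.card_fin, nsmul_eq_mul]
        try ring
      have htq : ∑ k, t k = (n : ℤ) * q := by
        rw [hfin] at hq; omega
      have : (∑ k, j k) = ((∑ k, t k : ℤ) : ℚ) := by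
        push_cast
        exact (Finset.sum_congr rfl (fun k _ => (ht k).symm))
      rw [this, htq]; push_cast; ring
    · -- even case: j k are half-integers
      have hm : 0 < m := by omega
      choose t ht using fun k => (hprop k).1
      set f : Fin n → ℤ := fun k => t k + m with hf_def
      have hinj : Function.Injective f := by
        intro k l h
        have htt : t k = t l := by simpa [hf_def] using h
        apply hmono.injective
        rw [ht k, ht l, htt]
      have hlb : ∀ k, 0 ≤ f k := by
        intro k
        have h0 := (hprop k).2.1
        rw [ht k] at h0
        have : -(m : ℤ) ≤ t k := by
          have : -(m : ℚ) ≤ (t k : ℚ) := by linarith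
          exact_mod_cast this
        simp only [hf_def]; omega
      have hub : ∀ k, f k < 2 * n := by
        intro k
        have h0 := (hprop k).2.2
        rw [ht k] at h0
        have : t k ≤ 3 * (m : ℤ) - 1 := by
          have : (t k : ℚ) ≤ 3 * m - 1 := by linarith
          exact_mod_cast this
        simp only [hf_def]; omega
      have hdiff : ∀ k l, f k - f l ≠ (n : ℤ) := by
        intro k l heq
        have hkl : k ≠ l := by
          rintro rfl; simp at heq; omega
        apply hjdiff k l hkl
        have htl : t k - t l = (n : ℤ) := by simp only [hf_def] at heq; omega
        have := congrArg (fun x : ℤ => (x : ℚ)) htl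
        push_cast at this
        rw [ht k, ht l]
        linarith
      obtain ⟨q, hq⟩ := aux_key_sum n hn f hinj hlb hub hdiff
      have hfin : (∑ i : Fin n, (i : ℤ)) = (m : ℤ) * (2 * m - 1) := by
        have := aux_sum_fin_int n
        have h2 : ((n : ℤ)) * ((n : ℤ) - 1) = ((m : ℤ) * (2 * m - 1)) * 2 := by
          subst hnm; push_cast; ring
        rw [h2] at this
        exact mul_right_cancel₀ (by norm_num) this
      refine ⟨q, ?_⟩
      have hft : ∑ k, f k = ∑ k, t k + (n : ℤ) * m := by
        simp only [hf_def, Finset.sum_add_distrib, Finset.sum_const, Finset.card_univ,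
          Fintype.card_fin, nsmul_eq_mul]
        try ring
      have htq : ∑ k, t k = (n : ℤ) * q - m := by
        rw [hfin] at hq
        have hn2 : (n : ℤ) = 2 * m := by exact_mod_cast congrArg (Nat.cast : ℕ → ℤ) hnm
        rw [hn2] at hq hft ⊢
        nlinarith [hq, hft]
      have : (∑ k, j k) = ((∑ k, t k : ℤ) : ℚ) + (n : ℚ) * (1 / 2) := by
        have : (∑ k, j k) = ∑ k, ((t k : ℚ) + 1 / 2) :=
          Finset.sum_congr rfl (fun k _ => ht k)
        rw [this, Finset.sum_add_distrib]
        push_cast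
        simp [Finset.card_univ]
        try ring
      rw [this, htq]
      have hn2 : (n : ℚ) = 2 * m := by exact_mod_cast congrArg (Nat.cast : ℕ → ℚ) hnm
      push_cast
      rw [hn2]
      ring
  -- Finish: the product is exp(q * π i) = (±1).
  obtain ⟨q, hq⟩ := hsum
  rw [← Complex.exp_sum]
  have harg : ∑ k, Real.pi * Complex.I * (j k : ℂ) / (n : ℂ) =
      (q : ℂ) * (Real.pi * Complex.I) := by
    rw [← Finset.sum_div]
    have h1 : ∑ k, Real.pi * Complex.I * (j k : ℂ) =
        Real.pi * Complex.I * ∑ k, ((j k : ℚ) : ℂ) := by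
      rw [Finset.mul_sum]
    have h2 : (∑ k, ((j k : ℚ) : ℂ)) = (n : ℂ) * q := by
      have := congrArg (fun x : ℚ => (x : ℂ)) hq
      push_cast at this
      simpa using this
    rw [h1, h2]
    field_simp
  rw [harg, Complex.exp_int_mul, Complex.exp_pi_mul_I]
  rcases Int.even_or_odd q with he | ho
  · left; exact he.neg_one_zpow
  · right; exact ho.neg_one_zpow
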